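/- Let A be a self-adjoint operator on a finite-dimensional complex Hilbert space with eigenprojections {E_α}, ψ a unit vector, and Δ ⊆ σ(A) with E_Δ ψ ≠ 0 where E_Δ = Σ_{α∈Δ} E_α. Then the updated state T_{(Δ,A)}(|ψ⟩⟨ψ|) = (1/⟨ψ, E_Δψ⟩) Σ_{α∈Δ} E_α|ψ⟩⟨ψ|E_α is a rank-one projection (a pure state) if and only if E_Δψ is an eigenvector of A whose eigenvalue lies in Δ. -/

import Mathlib

open Matrix

lemma vmv_mul_vmv {n : ℕ} (a b c d : Fin n → ℂ) :
    vecMulVec a b * vecMulVec c d = (b ⬝ᵥ c) • vecMulVec a d := by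
  ext i j
  simp only [mul_apply, vecMulVec_apply, Matrix.smul_apply, smul_eq_mul, dotProduct,
    Finset.sum_mul]
  exact Finset.sum_congr rfl fun k _ => by ring

lemma vmv_mulVec {n : ℕ} (a b x : Fin n → ℂ) :
    vecMulVec a b *ᵥ x = (b ⬝ᵥ x) • a := by
  ext i
  simp only [mulVec, dotProduct, vecMulVec_apply, Pi.smul_apply, smul_eq_mul,
    Finset.sum_mul]
  exact Finset.sum_congr rfl fun k _ => by ring

lemma mul_vmv_mul {n : ℕ} (M N : Matrix (Fin n) (Fin n) ℂ) (u v : Fin n → ℂ) :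
    M * vecMulVec u v * N = vecMulVec (M *ᵥ u) (v ᵥ* N) := by
  rw [vecMulVec_eq Unit, vecMulVec_eq Unit, replicateCol_mulVec, replicateRow_vecMul]
  simp only [Matrix.mul_assoc]

lemma vmv_star_herm {n : ℕ} (w : Fin n → ℂ) :
    (vecMulVec w (star w))ᴴ = vecMulVec w (star w) := by
  ext i j
  simp only [conjTranspose_apply, vecMulVec_apply, Pi.star_apply, star_mul',
    star_star]
  ring

lemma star_self_dot {n : ℕ} (u : Fin n → ℂ) :
    star u ⬝ᵥ u = ((∑ i, Complex.normSq (u i) : ℝ) : ℂ) := by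
  push_cast
  simp only [dotProduct, Pi.star_apply, Complex.normSq_eq_conj_mul_self,
    Complex.star_def]

lemma rank_vmv_star {n : ℕ} (u : Fin n → ℂ) (hu : u ≠ 0) :
    (vecMulVec u (star u)).rank = 1 := by
  have hd : (star u ⬝ᵥ u) ≠ 0 := by
    rw [star_self_dot, Ne, Complex.ofReal_eq_zero]
    intro h0
    apply hu
    funext i
    have := (Finset.sum_eq_zero_iff_of_nonneg
      (fun i _ => Complex.normSq_nonneg (u i))).1 h0 i (Finset.mem_univ i)
    exact Complex.normSq_eq_zero.1 this
  have hr : LinearMap.range (vecMulVec u (star u)).mulVecLin = ℂ ∙ u := by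
    apply le_antisymm
    · rintro x ⟨y, rfl⟩
      rw [mulVecLin_apply, vmv_mulVec]
      exact Submodule.smul_mem _ _ (Submodule.mem_span_singleton_self u)
    · rw [Submodule.span_singleton_le_iff_mem]
      exact ⟨(star u ⬝ᵥ u)⁻¹ • u, by
        rw [mulVecLin_apply, mulVec_smul, vmv_mulVec, smul_smul,
          inv_mul_cancel₀ hd, one_smul]⟩
  rw [Matrix.rank, hr, finrank_span_singleton hu]

lemma dot_sum' {n : ℕ} (s : Finset ℝ) (w : Fin n → ℂ) (f : ℝ → Fin n → ℂ) :
    w ⬝ᵥ (∑ i ∈ s, f i) = ∑ i ∈ s, w ⬝ᵥ f i := by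
  simp only [dotProduct, Finset.sum_apply, Finset.mul_sum]
  rw [Finset.sum_comm]

lemma sum_mulVec' {n : ℕ} (s : Finset ℝ) (M : ℝ → Matrix (Fin n) (Fin n) ℂ)
    (x : Fin n → ℂ) : (∑ i ∈ s, M i) *ᵥ x = ∑ i ∈ s, (M i *ᵥ x) := by
  ext j
  simp only [mulVec, dotProduct, Matrix.sum_apply, Finset.sum_apply,
    Finset.sum_mul]
  rw [Finset.sum_comm]

/-- With `A = ∑ α ∈ σA, α • E α` the spectral decomposition of the
self-adjoint `A`, `ψ` a unit vector and `Δ ⊆ σA` with `E_Δ ψ ≠ 0`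
(`E_Δ = ∑ α ∈ Δ, E α`), the updated state
`T_{(Δ,A)}(|ψ⟩⟨ψ|) = ⟨ψ, E_Δ ψ⟩⁻¹ • ∑ α ∈ Δ, E α |ψ⟩⟨ψ| E α`
is a rank-one projection (a pure state) iff `E_Δ ψ` is an eigenvector of `A`
whose eigenvalue lies in `Δ`. -/
theorem stmt18 {n : ℕ} (A : Matrix (Fin n) (Fin n) ℂ) (hA : A.IsHermitian)
    (σA : Finset ℝ) (E : ℝ → Matrix (Fin n) (Fin n) ℂ)
    (hEherm : ∀ α ∈ σA, (E α).IsHermitian)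
    (hEorth : ∀ α ∈ σA, ∀ α' ∈ σA, E α * E α' = if α = α' then E α else 0)
    (hEsum : ∑ α ∈ σA, E α = 1)
    (hAdec : A = ∑ α ∈ σA, (α : ℂ) • E α)
    (ψ : Fin n → ℂ) (hψ : star ψ ⬝ᵥ ψ = 1)
    (Δ : Finset ℝ) (hΔ : Δ ⊆ σA)
    (hne : (∑ α ∈ Δ, E α) *ᵥ ψ ≠ 0) :
    (((star ψ ⬝ᵥ ((∑ α ∈ Δ, E α) *ᵥ ψ))⁻¹ •
        ∑ α ∈ Δ, E α * vecMulVec ψ (star ψ) * E α).IsHermitian ∧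
     ((star ψ ⬝ᵥ ((∑ α ∈ Δ, E α) *ᵥ ψ))⁻¹ •
        ∑ α ∈ Δ, E α * vecMulVec ψ (star ψ) * E α) *
       ((star ψ ⬝ᵥ ((∑ α ∈ Δ, E α) *ᵥ ψ))⁻¹ •
        ∑ α ∈ Δ, E α * vecMulVec ψ (star ψ) * E α)
       = ((star ψ ⬝ᵥ ((∑ α ∈ Δ, E α) *ᵥ ψ))⁻¹ •
        ∑ α ∈ Δ, E α * vecMulVec ψ (star ψ) * E α) ∧
     ((star ψ ⬝ᵥ ((∑ α ∈ Δ, E α) *ᵥ ψ))⁻¹ •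
        ∑ α ∈ Δ, E α * vecMulVec ψ (star ψ) * E α).rank = 1)
    ↔ ∃ α ∈ Δ, A *ᵥ ((∑ α' ∈ Δ, E α') *ᵥ ψ) = (α : ℂ) • ((∑ α' ∈ Δ, E α') *ᵥ ψ) := by
  classical
  set v : ℝ → Fin n → ℂ := fun α => E α *ᵥ ψ with hv
  set R : ℝ → ℝ := fun α => ∑ i, Complex.normSq (v α i) with hRdef
  -- rewrite the summands
  have hterm : ∀ α ∈ Δ, E α * vecMulVec ψ (star ψ) * E α
      = vecMulVec (v α) (star (v α)) := by
    intro α hα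
    have hst : star ψ ᵥ* E α = star (v α) := by
      rw [hv]
      simp only
      rw [star_mulVec, (hEherm α (hΔ hα)).eq]
    rw [mul_vmv_mul, hst]
  have hsum : ∑ α ∈ Δ, E α * vecMulVec ψ (star ψ) * E α
      = ∑ α ∈ Δ, vecMulVec (v α) (star (v α)) := Finset.sum_congr rfl hterm
  rw [hsum]
  set S := ∑ α ∈ Δ, vecMulVec (v α) (star (v α)) with hS
  set c := star ψ ⬝ᵥ ((∑ α ∈ Δ, E α) *ᵥ ψ) with hcdef
  -- orthogonality of the v's
  have hdot : ∀ α ∈ σA, ∀ β ∈ σA,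
      star (v α) ⬝ᵥ v β = if α = β then star ψ ⬝ᵥ v α else 0 := by
    intro α hα β hβ
    have h1 : star (v α) ⬝ᵥ v β = star ψ ⬝ᵥ ((E α * E β) *ᵥ ψ) := by
      rw [hv]
      simp only
      rw [star_mulVec, (hEherm α hα).eq, dotProduct_mulVec, dotProduct_mulVec,
        vecMul_vecMul]
    rw [h1, hEorth α hα β hβ]
    rcases eq_or_ne α β with rfl | h
    · rw [if_pos rfl, if_pos rfl]
    · rw [if_neg h, if_neg h, zero_mulVec, dotProduct_zero]
  have hRv : ∀ α ∈ σA, star ψ ⬝ᵥ v α = ((R α : ℝ) : ℂ) := by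
    intro α hα
    have h := hdot α hα α hα
    rw [if_pos rfl] at h
    rw [← h, star_self_dot]
  have hR0 : ∀ α, v α ≠ 0 → 0 < R α := by
    intro α hα
    rcases lt_or_eq_of_le (Finset.sum_nonneg
      (fun i _ => Complex.normSq_nonneg (v α i))) with h | h
    · exact h
    · exfalso
      apply hα
      funext i
      exact Complex.normSq_eq_zero.1
        ((Finset.sum_eq_zero_iff_of_nonneg
          (fun i _ => Complex.normSq_nonneg (v α i))).1 h.symm i
          (Finset.mem_univ i))
  have hRnn : ∀ α, 0 ≤ R α :=
    fun α => Finset.sum_nonneg (fun i _ => Complex.normSq_nonneg (v α i))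
  have hEΔψ : (∑ α ∈ Δ, E α) *ᵥ ψ = ∑ α ∈ Δ, v α := sum_mulVec' Δ E ψ
  have hc : c = ((∑ α ∈ Δ, R α : ℝ) : ℂ) := by
    rw [hcdef, hEΔψ, dot_sum']
    push_cast
    exact Finset.sum_congr rfl fun α hα => hRv α (hΔ hα)
  obtain ⟨α₀, hα₀Δ, hvα₀⟩ : ∃ α ∈ Δ, v α ≠ 0 := by
    by_contra h
    push_neg at h
    exact hne (by rw [hEΔψ]; exact Finset.sum_eq_zero h)
  have hcRpos : 0 < ∑ α ∈ Δ, R α :=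
    Finset.sum_pos' (fun α _ => hRnn α) ⟨α₀, hα₀Δ, hR0 α₀ hvα₀⟩
  have hc0 : c ≠ 0 := by
    rw [hc]
    exact_mod_cast hcRpos.ne'
  have hSv : ∀ γ ∈ Δ, S *ᵥ v γ = ((R γ : ℝ) : ℂ) • v γ := by
    intro γ hγ
    rw [hS, sum_mulVec' Δ (fun α => vecMulVec (v α) (star (v α)))]
    rw [Finset.sum_eq_single_of_mem γ hγ]
    · rw [vmv_mulVec, hdot γ (hΔ hγ) γ (hΔ hγ), if_pos rfl, hRv γ (hΔ hγ)]
    · intro β hβ hβγ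
      rw [vmv_mulVec, hdot β (hΔ hβ) γ (hΔ hγ), if_neg hβγ, zero_smul]
  constructor
  · rintro ⟨-, hidem, -⟩
    have key : ∀ γ ∈ Δ, v γ ≠ 0 → R γ = ∑ α ∈ Δ, R α := by
      intro γ hγ hvγ
      have h1 : (c⁻¹ • S) *ᵥ v γ = (c⁻¹ * ((R γ : ℝ) : ℂ)) • v γ := by
        rw [smul_mulVec, hSv γ hγ, smul_smul]
      have h2 := congrArg (fun M => M *ᵥ v γ) hidem
      rw [← mulVec_mulVec, h1, mulVec_smul, h1, smul_smul] at h2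
      have h3 : (c⁻¹ * ((R γ : ℝ) : ℂ) * (c⁻¹ * ((R γ : ℝ) : ℂ))
          - c⁻¹ * ((R γ : ℝ) : ℂ)) • v γ = 0 := by
        rw [sub_smul, h2, sub_self]
      rcases smul_eq_zero.mp h3 with h4 | h4
      swap
      · exact absurd h4 hvγ
      have hx0 : c⁻¹ * ((R γ : ℝ) : ℂ) ≠ 0 :=
        mul_ne_zero (inv_ne_zero hc0)
          (Complex.ofReal_ne_zero.2 (hR0 γ hvγ).ne')
      have h5 : c⁻¹ * ((R γ : ℝ) : ℂ) = 1 := by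
        have := mul_eq_zero.mp (by linear_combination h4 :
          (c⁻¹ * ((R γ : ℝ) : ℂ)) * (c⁻¹ * ((R γ : ℝ) : ℂ) - 1) = 0)
        rcases this with h | h
        · exact absurd h hx0
        · linear_combination h
      have h6 : ((R γ : ℝ) : ℂ) = c := by
        field_simp at h5
        linear_combination h5
      rw [hc] at h6
      exact_mod_cast h6
    have huniq : ∀ β ∈ Δ, β ≠ α₀ → v β = 0 := by
      intro β hβ hβne
      by_contra hvβ
      have e1 := key α₀ hα₀Δ hvα₀
      have e2 := key β hβ hvβ
      have hsub : ({α₀, β} : Finset ℝ) ⊆ Δ := by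
        intro x hx
        rcases Finset.mem_insert.1 hx with rfl | hx
        · exact hα₀Δ
        · rwa [Finset.mem_singleton.1 hx]
      have hle : R α₀ + R β ≤ ∑ α ∈ Δ, R α := by
        have := Finset.sum_le_sum_of_subset_of_nonneg hsub
          (fun i _ _ => hRnn i)
        rwa [Finset.sum_pair (Ne.symm hβne)] at this
      linarith
    refine ⟨α₀, hα₀Δ, ?_⟩
    have hEΔv : (∑ α' ∈ Δ, E α') *ᵥ ψ = v α₀ := by
      rw [hEΔψ]
      exact Finset.sum_eq_single_of_mem α₀ hα₀Δ huniq
    rw [hEΔv, hAdec, sum_mulVec']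
    rw [Finset.sum_eq_single_of_mem α₀ (hΔ hα₀Δ)]
    · rw [smul_mulVec, hv]
      simp only
      rw [mulVec_mulVec, hEorth α₀ (hΔ hα₀Δ) α₀ (hΔ hα₀Δ), if_pos rfl]
    · intro β hβ hβne
      rw [smul_mulVec, hv]
      simp only
      rw [mulVec_mulVec, hEorth β hβ α₀ (hΔ hα₀Δ), if_neg hβne, zero_mulVec,
        smul_zero]
  · rintro ⟨α₀, hα₀, heig⟩
    have hzero : ∀ β ∈ Δ, β ≠ α₀ → v β = 0 := by
      intro β hβ hβne
      have hEβA : E β * A = (β : ℂ) • E β := by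
        rw [hAdec, Finset.mul_sum]
        rw [Finset.sum_eq_single_of_mem β (hΔ hβ)]
        · rw [mul_smul_comm, hEorth β (hΔ hβ) β (hΔ hβ), if_pos rfl]
        · intro γ hγ hγne
          rw [mul_smul_comm, hEorth β (hΔ hβ) γ hγ, if_neg (Ne.symm hγne),
            smul_zero]
      have hEβΔ : E β * (∑ γ ∈ Δ, E γ) = E β := by
        rw [Finset.mul_sum]
        rw [Finset.sum_eq_single_of_mem β hβ]
        · rw [hEorth β (hΔ hβ) β (hΔ hβ), if_pos rfl]
        · intro γ hγ hγne
          rw [hEorth β (hΔ hβ) γ (hΔ hγ), if_neg (Ne.symm hγne)]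
      have h1 : ((β : ℂ)) • v β = ((α₀ : ℂ)) • v β := by
        have h := congrArg (fun x => E β *ᵥ x) heig
        simp only [mulVec_smul, mulVec_mulVec] at h
        rw [← Matrix.mul_assoc, hEβA, Matrix.smul_mul, hEβΔ,
          smul_mulVec] at h
        exact h
      have h2 : (((β : ℂ)) - ((α₀ : ℂ))) • v β = 0 := by
        rw [sub_smul, h1, sub_self]
      rcases smul_eq_zero.mp h2 with h3 | h3
      · exfalso
        apply hβne
        have : (β : ℂ) = (α₀ : ℂ) := by linear_combination h3
        exact_mod_cast this
      · exact h3
    have hEΔv : (∑ α' ∈ Δ, E α') *ᵥ ψ = v α₀ := by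
      rw [hEΔψ]
      exact Finset.sum_eq_single_of_mem α₀ hα₀ hzero
    have hvα₀' : v α₀ ≠ 0 := by rw [← hEΔv]; exact hne
    have hS1 : S = vecMulVec (v α₀) (star (v α₀)) := by
      rw [hS]
      refine Finset.sum_eq_single_of_mem α₀ hα₀ ?_
      intro β hβ hβne
      rw [hzero β hβ hβne]
      ext i j
      simp [vecMulVec_apply]
    have hcR : c = ((R α₀ : ℝ) : ℂ) := by
      rw [hcdef, hEΔv]
      exact hRv α₀ (hΔ hα₀)
    have hstarc : star c = c := by
      rw [hcR, Complex.star_def, Complex.conj_ofReal]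
    have hRpos : 0 < R α₀ := hR0 α₀ hvα₀'
    have hdotw : star (v α₀) ⬝ᵥ v α₀ = c := by
      rw [star_self_dot, hcR]
    refine ⟨?_, ?_, ?_⟩
    · rw [hS1]
      unfold Matrix.IsHermitian
      rw [conjTranspose_smul, vmv_star_herm, star_inv₀, hstarc]
    · rw [hS1, Matrix.smul_mul, Matrix.mul_smul, vmv_mul_vmv, hdotw,
        smul_smul, smul_smul]
      congr 1
      field_simp
    · rw [hS1]
      set s : ℝ := (Real.sqrt (R α₀))⁻¹ with hsdef
      have hspos : 0 < s := by
        rw [hsdef]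
        exact inv_pos.2 (Real.sqrt_pos.2 hRpos)
      set u : Fin n → ℂ := ((s : ℝ) : ℂ) • v α₀ with hu
      have hss' : s * s = (R α₀)⁻¹ := by
        rw [hsdef, ← mul_inv, Real.mul_self_sqrt (hRnn α₀)]
      have hss : ((s : ℝ) : ℂ) * ((s : ℝ) : ℂ) = c⁻¹ := by
        rw [hcR, ← Complex.ofReal_mul, hss', Complex.ofReal_inv]
      have hequ : c⁻¹ • vecMulVec (v α₀) (star (v α₀))
          = vecMulVec u (star u) := by
        ext i j
        rw [hu]
        simp only [Matrix.smul_apply, vecMulVec_apply, Pi.smul_apply, Pi.star_apply,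
          smul_eq_mul, star_mul', Complex.star_def, Complex.conj_ofReal]
        rw [← hss]
        ring
      rw [hequ]
      exact rank_vmv_star u
        (smul_ne_zero (Complex.ofReal_ne_zero.2 hspos.ne') hvα₀')
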